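/- Let (K,v) be a valued field of characteristic p > 0 and (K(θ)|K,v) an Artin-Schreier extension with Artin-Schreier generator θ. If v(θ−c) < 0 for all c ∈ K and the set v(θ−K) has no maximal element, then the extension of v from K to K(θ) is unique and (K(θ)|K,v) is immediate with defect p. -/

import Mathlib

namespace Statement19

/-- `(F|K,v)` is an *immediate* extension of valued fields: the canonical embeddings
`vK → vF` and `Kv → Fv` are surjective (multiplicative notation). -/
def IsImmediateExtension (K F : Type*) [Field K] [Field F] [Algebra K F]
    {Γ : Type*} [LinearOrderedCommGroupWithZero Γ] (v : Valuation F Γ) : Prop :=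
  (∀ x : F, ∃ c : K, v (algebraMap K F c) = v x) ∧
  (∀ x : F, v x ≤ 1 → ∃ c : K, v (x - algebraMap K F c) < 1)

/-- The extension of the valuation `v` from `K` to `F` is unique: there is exactly one
valuation ring of `F` lying over the valuation ring of the restriction of `v` to `K`,
namely that of `v`.  (Valuation subrings of `F` whose preimage in `K` is the valuation
ring of `v|K` correspond exactly to the extensions of `v|K` to `F`, up to equivalence.) -/
def UniqueExtension (K F : Type*) [Field K] [Field F] [Algebra K F]
    {Γ : Type*} [LinearOrderedCommGroupWithZero Γ] (v : Valuation F Γ) : Prop :=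
  ∀ R : ValuationSubring F,
    R.toSubring.comap (algebraMap K F) = (v.comap (algebraMap K F)).integer →
    R = v.valuationSubring

open Polynomial

section Dev

variable {K F Γ : Type*} [Field K] [Field F] [Algebra K F]
  [LinearOrderedCommGroupWithZero Γ]

/-! ### order lemmas -/

lemma pow_lt_pow_left' {a b : Γ} (h : a < b) {n : ℕ} (hn : n ≠ 0) : a ^ n < b ^ n :=
  pow_lt_pow_left₀ h zero_le' hn

lemma mul_lt_mul_left' {a b c : Γ} (hc : c ≠ 0) (h : a < b) : c * a < c * b :=
  mul_lt_mul_of_le_of_lt_of_nonneg_of_pos le_rfl h zero_le' (zero_lt_iff.mpr hc)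

lemma lt_of_pow_lt_pow' {a b : Γ} {n : ℕ} (h : a ^ n < b ^ n) : a < b := by
  by_contra hab
  push_neg at hab
  exact absurd (pow_le_pow_left₀ zero_le' hab n) h.not_ge

lemma mul_lt_mul_right' {a b c : Γ} (hc : c ≠ 0) (h : a < b) : a * c < b * c := by
  rw [mul_comm a c, mul_comm b c]; exact mul_lt_mul_left' hc h

lemma inv_le_one_of_one_le' {a : Γ} (h : 1 ≤ a) : a⁻¹ ≤ 1 := by
  have ha : a ≠ 0 := (zero_lt_one.trans_le h).ne'
  have := mul_le_mul_right h a⁻¹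
  rwa [mul_one, inv_mul_cancel₀ ha] at this

lemma one_le_of_inv_le_one' {a : Γ} (ha : a ≠ 0) (h : a⁻¹ ≤ 1) : 1 ≤ a := by
  have := mul_le_mul_right h a
  rwa [mul_one, mul_inv_cancel₀ ha] at this

lemma one_lt_div' {a b : Γ} (hb : b ≠ 0) (h : b < a) : 1 < a * b⁻¹ := by
  have : b * b⁻¹ < a * b⁻¹ := mul_lt_mul_right' (inv_ne_zero hb) h
  rwa [mul_inv_cancel₀ hb] at this

/-! ### the tail filter -/

/-- `P c` holds for all `c` with `v (θ - c)` small enough (i.e. deep in the cut). -/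
def Ev (v : Valuation F Γ) (θ : F) (P : K → Prop) : Prop :=
  ∃ c₀ : K, ∀ c : K, v (θ - algebraMap K F c) < v (θ - algebraMap K F c₀) → P c

variable {v : Valuation F Γ} {θ : F}

lemma Ev.and {P Q : K → Prop} (hP : Ev v θ P) (hQ : Ev v θ Q) :
    Ev v θ fun c => P c ∧ Q c := by
  obtain ⟨c₀, h₀⟩ := hP
  obtain ⟨c₁, h₁⟩ := hQ
  rcases le_total (v (θ - algebraMap K F c₀)) (v (θ - algebraMap K F c₁)) with h | h
  · exact ⟨c₀, fun c hc => ⟨h₀ c hc, h₁ c (lt_of_lt_of_le hc h)⟩⟩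
  · exact ⟨c₁, fun c hc => ⟨h₀ c (lt_of_lt_of_le hc h), h₁ c hc⟩⟩

lemma Ev.mono {P Q : K → Prop} (h : ∀ c, P c → Q c) (hP : Ev v θ P) : Ev v θ Q := by
  obtain ⟨c₀, h₀⟩ := hP
  exact ⟨c₀, fun c hc => h c (h₀ c hc)⟩

lemma Ev.of_forall {P : K → Prop} (h : ∀ c, P c) : Ev v θ P :=
  ⟨0, fun c _ => h c⟩

section WithNomax

variable (hnomax : ∀ c : K, ∃ c' : K,
    v (θ - algebraMap K F c') < v (θ - algebraMap K F c))

include hnomax in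
lemma Ev.elim {P : K → Prop} (hP : Ev v θ P) : ∃ c, P c := by
  obtain ⟨c₀, h₀⟩ := hP
  obtain ⟨c₁, hc₁⟩ := hnomax c₀
  exact ⟨c₁, h₀ c₁ hc₁⟩

include hnomax in
lemma Ev.elim2 {P : K → Prop} (hP : Ev v θ P) :
    ∃ c c', P c ∧ P c' ∧ v (θ - algebraMap K F c') < v (θ - algebraMap K F c) := by
  obtain ⟨c₀, h₀⟩ := hP
  obtain ⟨c₁, hc₁⟩ := hnomax c₀
  obtain ⟨c₂, hc₂⟩ := hnomax c₁
  exact ⟨c₁, c₂, h₀ c₁ hc₁, h₀ c₂ (hc₂.trans hc₁), hc₂⟩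

end WithNomax

lemma Ev.finsetForall {s : Finset ℕ} {P : ℕ → K → Prop}
    (h : ∀ i ∈ s, Ev v θ (P i)) : Ev v θ fun c => ∀ i ∈ s, P i c := by
  classical
  induction s using Finset.induction with
  | empty => exact Ev.of_forall fun c => by simp
  | @insert j s hns ih =>
    have h1 : Ev v θ (P j) := h j (Finset.mem_insert_self j s)
    have h2 := ih fun i hi => h i (Finset.mem_insert_of_mem hi)
    exact (h1.and h2).mono fun c hc i hi => by
      rcases Finset.mem_insert.mp hi with rfl | hi
      · exact hc.1
      · exact hc.2 i hi

section Max

variable {v : Valuation F Γ} {θ : F}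
variable (hneg : ∀ c : K, 1 < v (θ - algebraMap K F c))

include hneg in
lemma gam_ne_zero (c : K) : v (θ - algebraMap K F c) ≠ 0 :=
  (zero_lt_one.trans (hneg c)).ne'

include hneg in
/-- Comparison of two "monomial" value functions with distinct exponents is eventually
constant and strict. -/
lemma pair {B₁ B₂ : Γ} (hB₁ : B₁ ≠ 0) (hB₂ : B₂ ≠ 0) {e₁ e₂ : ℕ} (h : e₁ < e₂) :
    Ev v θ (fun c => B₁ * v (θ - algebraMap K F c) ^ e₁ <
      B₂ * v (θ - algebraMap K F c) ^ e₂) ∨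
    Ev v θ (fun c => B₂ * v (θ - algebraMap K F c) ^ e₂ <
      B₁ * v (θ - algebraMap K F c) ^ e₁) := by
  by_cases hA : ∃ c₀ : K, B₂ * v (θ - algebraMap K F c₀) ^ e₂ ≤
      B₁ * v (θ - algebraMap K F c₀) ^ e₁
  · right
    obtain ⟨c₀, hc₀⟩ := hA
    refine ⟨c₀, fun c hc => ?_⟩
    set x := v (θ - algebraMap K F c) with hx
    set y := v (θ - algebraMap K F c₀) with hy
    have hy0 : y ≠ 0 := gam_ne_zero hneg c₀
    have hx0 : x ≠ 0 := gam_ne_zero hneg c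
    set δ : Γ := x * y⁻¹ with hδ
    have hδ0 : δ ≠ 0 := mul_ne_zero hx0 (inv_ne_zero hy0)
    have hδ1 : δ < 1 := by
      have : x * y⁻¹ < y * y⁻¹ := mul_lt_mul_right' (inv_ne_zero hy0) hc
      rwa [mul_inv_cancel₀ hy0] at this
    have hxy : x = y * δ := by
      rw [hδ, ← mul_assoc, mul_comm y x, mul_assoc, mul_inv_cancel₀ hy0, mul_one]
    have key : ∀ e : ℕ, x ^ e = y ^ e * δ ^ e := fun e => by rw [hxy, mul_pow]
    calc B₂ * x ^ e₂ = B₂ * y ^ e₂ * δ ^ e₂ := by rw [key, mul_assoc]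
      _ ≤ B₁ * y ^ e₁ * δ ^ e₂ := mul_le_mul_left hc₀ _
      _ < B₁ * y ^ e₁ * δ ^ e₁ :=
          mul_lt_mul_left' (mul_ne_zero hB₁ (pow_ne_zero _ hy0))
            (pow_lt_pow_right_of_lt_one₀ (zero_lt_iff.mpr hδ0) hδ1 h)
      _ = B₁ * x ^ e₁ := by rw [key, mul_assoc]
  · left
    push_neg at hA
    exact Ev.of_forall fun c => hA c

include hneg in
lemma maxlemma (B : ℕ → Γ) :
    ∀ I : Finset ℕ, I.Nonempty → (∀ i ∈ I, B i ≠ 0) →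
      ∃ k ∈ I, Ev v θ fun c => ∀ i ∈ I, i ≠ k →
        B i * v (θ - algebraMap K F c) ^ i < B k * v (θ - algebraMap K F c) ^ k := by
  intro I hne
  induction hne using Finset.Nonempty.cons_induction with
  | singleton a =>
    intro _
    exact ⟨a, Finset.mem_singleton_self a,
      Ev.of_forall fun c i hi hik => absurd (Finset.mem_singleton.mp hi) hik⟩
  | cons j s hjs hs ih =>
    intro hB
    obtain ⟨k, hkI, hEvk⟩ := ih fun i hi => hB i (Finset.mem_cons_of_mem hi)
    have hjk : j ≠ k := fun h => hjs (h ▸ hkI)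
    have hBj : B j ≠ 0 := hB j (Finset.mem_cons_self j s)
    have hBk : B k ≠ 0 := hB k (Finset.mem_cons_of_mem hkI)
    have hdisj : Ev v θ (fun c => B j * v (θ - algebraMap K F c) ^ j <
          B k * v (θ - algebraMap K F c) ^ k) ∨
        Ev v θ (fun c => B k * v (θ - algebraMap K F c) ^ k <
          B j * v (θ - algebraMap K F c) ^ j) := by
      rcases lt_or_gt_of_ne hjk with hlt | hgt
      · exact pair hneg hBj hBk hlt
      · exact (pair hneg hBk hBj hgt).symm
    rcases hdisj with hjlt | hklt
    · refine ⟨k, Finset.mem_cons_of_mem hkI, (hEvk.and hjlt).mono fun c hc i hi hik => ?_⟩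
      rcases Finset.mem_cons.mp hi with rfl | hi
      · exact hc.2
      · exact hc.1 i hi hik
    · refine ⟨j, Finset.mem_cons_self j s, (hEvk.and hklt).mono fun c hc i hi hij => ?_⟩
      rcases Finset.mem_cons.mp hi with rfl | hi
      · exact absurd rfl hij
      · rcases eq_or_ne i k with rfl | hik
        · exact hc.2
        · exact (hc.1 i hi hik).trans hc.2

end Max

lemma val_sum_eq {ι : Type*} [DecidableEq ι] (v : Valuation F Γ) {s : Finset ι}
    {g : ι → F} {j : ι} (hj : j ∈ s) (h0 : v (g j) ≠ 0)
    (h : ∀ i ∈ s, i ≠ j → v (g i) < v (g j)) : v (∑ i ∈ s, g i) = v (g j) := by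
  rw [← Finset.add_sum_erase s g hj]
  apply Valuation.map_add_eq_of_lt_left
  apply Valuation.map_sum_lt v h0
  intro i hi
  exact h i (Finset.mem_of_mem_erase hi) (Finset.ne_of_mem_erase hi)

/-! ### Taylor expansion -/

lemma hasseDeriv_map' (f : K[X]) (i : ℕ) :
    hasseDeriv i (f.map (algebraMap K F)) = (hasseDeriv i f).map (algebraMap K F) := by
  ext n
  simp [hasseDeriv_coeff, coeff_map, map_natCast]

lemma eval_map_algebraMap (f : K[X]) (c : K) :
    (f.map (algebraMap K F)).eval (algebraMap K F c) = algebraMap K F (f.eval c) := by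
  rw [eval_map, eval₂_at_apply]

lemma taylor_expand (θ : F) (f : K[X]) (c : K) :
    aeval θ f = algebraMap K F (f.eval c) +
      ∑ i ∈ Finset.Icc 1 f.natDegree,
        algebraMap K F ((hasseDeriv i f).eval c) * (θ - algebraMap K F c) ^ i := by
  have hinj : Function.Injective (algebraMap K F) := (algebraMap K F).injective
  have hdeg : (f.map (algebraMap K F)).natDegree = f.natDegree :=
    natDegree_map_eq_of_injective hinj f
  have h1 : aeval θ f = (f.map (algebraMap K F)).eval θ := by
    rw [aeval_def, eval_map]
  have h2 : (f.map (algebraMap K F)).eval θ =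
      (taylor (algebraMap K F c) (f.map (algebraMap K F))).eval (θ - algebraMap K F c) :=
    (taylor_eval_sub _ _ _).symm
  have h3 : (taylor (algebraMap K F c) (f.map (algebraMap K F))).eval (θ - algebraMap K F c) =
      ∑ i ∈ Finset.range (f.natDegree + 1),
        algebraMap K F ((hasseDeriv i f).eval c) * (θ - algebraMap K F c) ^ i := by
    rw [eval_eq_sum_range' (by rw [natDegree_taylor, hdeg]; exact Nat.lt_succ_self _)]
    refine Finset.sum_congr rfl fun i _ => ?_
    rw [taylor_coeff, hasseDeriv_map', eval_map_algebraMap]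
  have hsplit : Finset.range (f.natDegree + 1) = insert 0 (Finset.Icc 1 f.natDegree) := by
    ext i
    simp only [Finset.mem_range, Finset.mem_insert, Finset.mem_Icc]
    omega
  rw [h1, h2, h3, hsplit, Finset.sum_insert (by simp)]
  rw [pow_zero, mul_one, hasseDeriv_zero']

/-! ### Good polynomials -/

/-- `f` is *good* (w.r.t. the net of elements of `K` approaching `θ`): the values
`v(f(c))` are eventually equal to `v(f(θ)) ≠ 0` and all the nonconstant Taylor terms
of `f` at `c`, evaluated at `θ`, are eventually strictly smaller. -/
def Good (v : Valuation F Γ) (θ : F) (f : K[X]) : Prop :=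
  v (aeval θ f) ≠ 0 ∧
  Ev v θ fun c =>
    v (algebraMap K F (f.eval c)) = v (aeval θ f) ∧
    ∀ i, 1 ≤ i →
      v (algebraMap K F ((hasseDeriv i f).eval c) * (θ - algebraMap K F c) ^ i) <
        v (aeval θ f)

variable {v : Valuation F Γ} {θ : F}

lemma Good.diff {f : K[X]} (hf : Good v θ f) :
    Ev v θ fun c =>
      v (algebraMap K F (f.eval c)) = v (aeval θ f) ∧
      v (aeval θ f - algebraMap K F (f.eval c)) < v (aeval θ f) := by
  refine hf.2.mono fun c hc => ⟨hc.1, ?_⟩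
  have hsum : aeval θ f - algebraMap K F (f.eval c) =
      ∑ i ∈ Finset.Icc 1 f.natDegree,
        algebraMap K F ((hasseDeriv i f).eval c) * (θ - algebraMap K F c) ^ i := by
    rw [taylor_expand θ f c]; ring
  rw [hsum]
  exact Valuation.map_sum_lt v hf.1 fun i hi => hc.2 i (Finset.mem_Icc.mp hi).1

lemma good_C {b : K} (hb : b ≠ 0) : Good v θ (C b : K[X]) := by
  have hb' : algebraMap K F b ≠ 0 :=
    (map_ne_zero_iff _ (algebraMap K F).injective).mpr hb
  have hβ : v (aeval θ (C b : K[X])) ≠ 0 := by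
    simpa using (Valuation.ne_zero_iff v).mpr hb'
  refine ⟨hβ, Ev.of_forall fun c => ⟨by simp, fun i hi => ?_⟩⟩
  have h0 : hasseDeriv i (C b : K[X]) = 0 := by
    apply hasseDeriv_eq_zero_of_lt_natDegree
    simpa using (show 0 < i by omega)
  rw [h0]
  simpa using zero_lt_iff.mpr hβ

section Linear

variable (hneg : ∀ c : K, 1 < v (θ - algebraMap K F c))

include hneg in
lemma good_linear {b d : K} (hb : b ≠ 0) : Good v θ (C b * X + C d) := by
  set f : K[X] := C b * X + C d with hf
  set e : K := -(d / b) with he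
  have hb' : algebraMap K F b ≠ 0 :=
    (map_ne_zero_iff _ (algebraMap K F).injective).mpr hb
  have hvb : v (algebraMap K F b) ≠ 0 := (Valuation.ne_zero_iff v).mpr hb'
  have he1 : ∀ c : K, f.eval c = b * (c - e) := by
    intro c
    rw [hf, he]
    simp only [eval_add, eval_mul, eval_C, eval_X]
    field_simp
    ring
  have he2 : aeval θ f = algebraMap K F b * (θ - algebraMap K F e) := by
    rw [hf, he]
    simp only [map_add, map_mul, aeval_C, aeval_X]
    rw [map_neg, map_div₀, sub_neg_eq_add, mul_add, mul_div_cancel₀ _ hb']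
  have hβ : v (aeval θ f) = v (algebraMap K F b) * v (θ - algebraMap K F e) := by
    rw [he2, Valuation.map_mul]
  have hβ0 : v (aeval θ f) ≠ 0 := by
    rw [hβ]; exact mul_ne_zero hvb (gam_ne_zero hneg e)
  refine ⟨hβ0, ⟨e, fun c hc => ⟨?_, ?_⟩⟩⟩
  · rw [he1 c, hβ]
    have : algebraMap K F (c - e) = (θ - algebraMap K F e) - (θ - algebraMap K F c) := by
      rw [map_sub]; ring
    rw [map_mul, Valuation.map_mul, this, Valuation.map_sub_eq_of_lt_left _ hc]
  · intro i hi
    rcases eq_or_lt_of_le hi with rfl | h2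
    · have hd1 : hasseDeriv 1 f = C b := by
        rw [hasseDeriv_one', hf]
        simp
      rw [hd1, eval_C, hβ, pow_one]
      rw [Valuation.map_mul]
      exact mul_lt_mul_left' hvb hc
    · have h0 : hasseDeriv i f = 0 := by
        apply hasseDeriv_eq_zero_of_lt_natDegree
        have : f.natDegree ≤ 1 := by
          rw [hf]; exact natDegree_linear_le
        omega
      rw [h0]
      simpa using zero_lt_iff.mpr hβ0

include hneg in
lemma good_deg1 {f : K[X]} (hdeg : f.natDegree = 1) : Good v θ f := by
  have hf0 : f ≠ 0 := fun h => by simp [h] at hdeg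
  have h1 : f = C (f.coeff 1) * X + C (f.coeff 0) :=
    eq_X_add_C_of_natDegree_le_one (le_of_eq hdeg)
  have hb : f.coeff 1 ≠ 0 := by
    have := leadingCoeff_ne_zero.mpr hf0
    rwa [leadingCoeff, hdeg] at this
  rw [h1]
  exact good_linear hneg hb

end Linear

section AS

variable {v : Valuation F Γ} {θ : F} {p : ℕ} {a : K}
variable (hneg : ∀ c : K, 1 < v (θ - algebraMap K F c))

lemma Aident (hp : p.Prime) [CharP K p] (ha : algebraMap K F a = θ ^ p - θ) (c : K) :
    algebraMap K F (a - c ^ p + c) =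
      (θ - algebraMap K F c) ^ p - (θ - algebraMap K F c) := by
  haveI : Fact p.Prime := ⟨hp⟩
  haveI : CharP F p := charP_of_injective_algebraMap (algebraMap K F).injective p
  have h1 : (θ - algebraMap K F c) ^ p = θ ^ p - algebraMap K F c ^ p := sub_pow_char θ (algebraMap K F c)
  rw [h1, map_add, map_sub, ha, map_pow]
  ring

include hneg in
lemma Aval (hp : p.Prime) [CharP K p] (ha : algebraMap K F a = θ ^ p - θ) (c : K) :
    v (algebraMap K F (a - c ^ p + c)) = v (θ - algebraMap K F c) ^ p := by
  rw [Aident hp ha c]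
  have hlt : v (θ - algebraMap K F c) < v ((θ - algebraMap K F c) ^ p) := by
    rw [Valuation.map_pow]
    calc v (θ - algebraMap K F c) = v (θ - algebraMap K F c) ^ 1 := (pow_one _).symm
      _ < v (θ - algebraMap K F c) ^ p := pow_lt_pow_right₀ (hneg c) hp.one_lt
  rw [Valuation.map_sub_eq_of_lt_left _ hlt, Valuation.map_pow]

lemma q_natDegree (hp : p.Prime) : (X ^ p - X - C a : K[X]).natDegree = p := by
  have h : (X ^ p - X - C a : K[X]) = X ^ p - (X + C a) := by ring
  rw [h]
  rw [natDegree_sub_eq_left_of_natDegree_lt, natDegree_X_pow]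
  rw [natDegree_X_pow, natDegree_X_add_C]
  exact hp.one_lt

lemma q_monic (hp : p.Prime) : (X ^ p - X - C a : K[X]).Monic := by
  unfold Monic leadingCoeff
  rw [q_natDegree hp]
  have h1 : p ≠ 1 := hp.one_lt.ne'
  have h0 : p ≠ 0 := hp.ne_zero
  simp only [coeff_sub, coeff_X_pow, if_pos rfl, coeff_C, coeff_X]
  rw [if_neg (show ¬(1 = p) from fun h => h1 h.symm), if_neg h0]
  simp

lemma q_aeval (ha : algebraMap K F a = θ ^ p - θ) :
    aeval θ (X ^ p - X - C a : K[X]) = 0 := by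
  simp only [map_sub, aeval_X_pow, aeval_X, aeval_C]
  rw [ha]; ring

lemma exists_poly_rep (hp : p.Prime) (ha : algebraMap K F a = θ ^ p - θ)
    (hgen : IntermediateField.adjoin K {θ} = ⊤) (x : F) :
    ∃ r : K[X], r.natDegree < p ∧ aeval θ r = x := by
  have hint : IsIntegral K θ := ⟨X ^ p - X - C a, q_monic hp, q_aeval ha⟩
  have hsub : Algebra.adjoin K ({θ} : Set F) = ⊤ := by
    have h := IntermediateField.adjoin_simple_toSubalgebra_of_isAlgebraic hint.isAlgebraic
    rw [hgen] at h
    rw [← h, IntermediateField.top_toSubalgebra]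
  have hx : x ∈ Algebra.adjoin K ({θ} : Set F) := by rw [hsub]; trivial
  rw [Algebra.adjoin_singleton_eq_range_aeval] at hx
  obtain ⟨g, hg⟩ := hx
  rw [AlgHom.toRingHom_eq_coe, RingHom.coe_coe] at hg
  have hM : (minpoly K θ).Monic := minpoly.monic hint
  refine ⟨g %ₘ minpoly K θ, ?_, ?_⟩
  · rcases eq_or_ne (g %ₘ minpoly K θ) 0 with h0 | h0
    · rw [h0]; simpa using hp.pos
    · rw [natDegree_lt_iff_degree_lt h0]
      calc (g %ₘ minpoly K θ).degree < (minpoly K θ).degree := degree_modByMonic_lt g hM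
        _ ≤ (X ^ p - X - C a : K[X]).degree := minpoly.min K θ (q_monic hp) (q_aeval ha)
        _ = ((X ^ p - X - C a : K[X]).natDegree : WithBot ℕ) :=
            degree_eq_natDegree (q_monic hp).ne_zero
        _ = (p : WithBot ℕ) := by rw [q_natDegree hp]
  · have hdiv := modByMonic_add_div g (minpoly K θ)
    have := congrArg (aeval θ) hdiv
    rw [map_add, map_mul, minpoly.aeval, zero_mul, add_zero] at this
    rw [this, hg]

end AS

section Exclusion

variable {v : Valuation F Γ} {θ : F} {p : ℕ} {a : K}
variable (hneg : ∀ c : K, 1 < v (θ - algebraMap K F c))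
variable (hnomax : ∀ c : K, ∃ c' : K,
    v (θ - algebraMap K F c') < v (θ - algebraMap K F c))

include hneg in
/-- Every nonzero polynomial has an eventual "monomial" value pattern, with exponent a
multiple of `k` bounded via the `f`-adic expansion. -/
lemma claim2 {f : K[X]} (hmonic : f.Monic) (hn1 : 1 ≤ f.natDegree)
    {k : ℕ} {B : Γ} (hk : 1 ≤ k) (hB : B ≠ 0)
    (hpat : Ev v θ fun c =>
      v (algebraMap K F (f.eval c)) = B * v (θ - algebraMap K F c) ^ k)
    (hgood : ∀ g : K[X], g ≠ 0 → g.natDegree < f.natDegree → Good v θ g) :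
    ∀ M : ℕ, ∀ g : K[X], g ≠ 0 → g.natDegree = M →
      ∃ J : ℕ, J * f.natDegree ≤ M ∧ ∃ Bg : Γ, Bg ≠ 0 ∧
        Ev v θ fun c =>
          v (algebraMap K F (g.eval c)) = Bg * v (θ - algebraMap K F c) ^ (k * J) := by
  intro M
  induction M using Nat.strong_induction_on with
  | _ M ih =>
  intro g hg0 hgM
  by_cases hMn : M < f.natDegree
  · obtain ⟨hβ0, hEv⟩ := hgood g hg0 (hgM ▸ hMn)
    refine ⟨0, by simp, v (aeval θ g), hβ0, hEv.mono fun c hc => ?_⟩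
    simpa using hc.1
  · push_neg at hMn
    have hr := modByMonic_add_div g f
    set h : K[X] := g /ₘ f with hh
    set r : K[X] := g %ₘ f with hrr
    have hrdeg : r = 0 ∨ r.natDegree < f.natDegree := by
      rcases eq_or_ne r 0 with h0 | h0
      · exact Or.inl h0
      · right
        rw [natDegree_lt_iff_degree_lt h0]
        calc r.degree < f.degree := degree_modByMonic_lt g hmonic
          _ = (f.natDegree : WithBot ℕ) := degree_eq_natDegree hmonic.ne_zero
    have hh0 : h ≠ 0 := by
      intro h0
      rw [h0, mul_zero, add_zero] at hr
      rcases hrdeg with h1 | h1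
      · exact hg0 (by rw [← hr, h1])
      · rw [hr, hgM] at h1; omega
    have hdh : h.natDegree = M - f.natDegree := by
      rw [hh, natDegree_divByMonic g hmonic, hgM]
    obtain ⟨J1, hJ1, B1, hB1, hEv1⟩ := ih (M - f.natDegree) (by omega) h hh0 hdh
    have hfh : Ev v θ fun c =>
        v (algebraMap K F ((f * h).eval c)) =
          (B * B1) * v (θ - algebraMap K F c) ^ (k * (J1 + 1)) :=
      (hpat.and hEv1).mono fun c hc => by
        rw [eval_mul, map_mul, Valuation.map_mul, hc.1, hc.2]
        rw [mul_mul_mul_comm, ← pow_add]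
        congr 2
        ring
    have hJbound : (J1 + 1) * f.natDegree ≤ M := by
      have h1 : (J1 + 1) * f.natDegree = J1 * f.natDegree + f.natDegree := by ring
      omega
    rcases eq_or_ne r 0 with hr0 | hr0
    · have hg : g = f * h := by rw [← hr, hr0, zero_add]
      exact ⟨J1 + 1, hJbound, B * B1, mul_ne_zero hB hB1,
        hfh.mono fun c hc => by rw [hg]; exact hc⟩
    · obtain ⟨hβr, hEvr⟩ := hgood r hr0 (hrdeg.resolve_left hr0)
      have hgeval : ∀ c : K, g.eval c = r.eval c + (f * h).eval c := by
        intro c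
        conv_lhs => rw [← hr]
        rw [eval_add]
      have hepos : 0 < k * (J1 + 1) := by positivity
      rcases pair hneg hβr (mul_ne_zero hB hB1) hepos with hcase | hcase
      · -- the f*h term dominates eventually
        refine ⟨J1 + 1, hJbound, B * B1, mul_ne_zero hB hB1,
          ((hEvr.and hfh).and hcase).mono fun c hc => ?_⟩
        obtain ⟨⟨hcr, hcfh⟩, hclt⟩ := hc
        rw [hgeval c, map_add, Valuation.map_add_eq_of_lt_right, hcfh]
        rw [hcr.1, hcfh]
        simpa using hclt
      · -- the remainder dominates eventually
        refine ⟨0, by simp, v (aeval θ r), hβr,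
          ((hEvr.and hfh).and hcase).mono fun c hc => ?_⟩
        obtain ⟨⟨hcr, hcfh⟩, hclt⟩ := hc
        rw [hgeval c, map_add, Valuation.map_add_eq_of_lt_left, hcr.1]
        · simp
        · rw [hcr.1, hcfh]
          simpa using hclt

include hneg hnomax in
lemma exclusion (hp : p.Prime) [CharP K p] (ha : algebraMap K F a = θ ^ p - θ)
    {f : K[X]} (hn2 : 2 ≤ f.natDegree) (hnp : f.natDegree < p)
    {k : ℕ} {B : Γ} (hk1 : 1 ≤ k) (hkn : k ≤ f.natDegree) (hB : B ≠ 0)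
    (hpat : Ev v θ fun c =>
      v (algebraMap K F (f.eval c)) = B * v (θ - algebraMap K F c) ^ k)
    (hgood : ∀ g : K[X], g ≠ 0 → g.natDegree < f.natDegree → Good v θ g) : False := by
  have hf0 : f ≠ 0 := fun h => by simp [h] at hn2
  have hu0 : f.leadingCoeff ≠ 0 := leadingCoeff_ne_zero.mpr hf0
  have hui : algebraMap K F f.leadingCoeff⁻¹ ≠ 0 := by
    rw [map_ne_zero_iff _ (algebraMap K F).injective]
    exact inv_ne_zero hu0
  set f' : K[X] := f * C f.leadingCoeff⁻¹ with hf'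
  have hmonic : f'.Monic := monic_mul_leadingCoeff_inv hf0
  have hdeg' : f'.natDegree = f.natDegree := by
    rw [hf', natDegree_mul_C (inv_ne_zero hu0)]
  have hB' : B * v (algebraMap K F f.leadingCoeff⁻¹) ≠ 0 :=
    mul_ne_zero hB ((Valuation.ne_zero_iff v).mpr hui)
  have hpat' : Ev v θ fun c =>
      v (algebraMap K F (f'.eval c)) =
        (B * v (algebraMap K F f.leadingCoeff⁻¹)) * v (θ - algebraMap K F c) ^ k :=
    hpat.mono fun c hc => by
      rw [hf', eval_mul, eval_C, map_mul, Valuation.map_mul, hc]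
      rw [mul_right_comm]
  have hgood' : ∀ g : K[X], g ≠ 0 → g.natDegree < f'.natDegree → Good v θ g := by
    rw [hdeg']; exact hgood
  -- apply the pattern lemma to the Artin-Schreier polynomial
  have hq0 : (X ^ p - X - C a : K[X]) ≠ 0 := (q_monic hp).ne_zero
  obtain ⟨J, hJ, Bq, hBq, hEvq⟩ :=
    claim2 hneg hmonic (by omega) hk1 hB' hpat' hgood' p (X ^ p - X - C a : K[X]) hq0
      (q_natDegree hp)
  have hqc : ∀ c : K, v (algebraMap K F ((X ^ p - X - C a : K[X]).eval c)) =
      v (θ - algebraMap K F c) ^ p := by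
    intro c
    have he : (X ^ p - X - C a : K[X]).eval c = -(a - c ^ p + c) := by
      simp only [eval_sub, eval_pow, eval_X, eval_C]
      ring
    rw [he, map_neg, Valuation.map_neg, Aval hneg hp ha c]
  obtain ⟨c, c', hc, hc', hlt⟩ := Ev.elim2 hnomax (hEvq.and (Ev.of_forall hqc))
  set G := v (θ - algebraMap K F c) with hG
  set G' := v (θ - algebraMap K F c') with hG'
  have hG0 : G ≠ 0 := gam_ne_zero hneg c
  have hG'0 : G' ≠ 0 := gam_ne_zero hneg c'
  have e1 : G ^ p = Bq * G ^ (k * J) := by rw [← hc.2, hc.1]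
  have e2 : G' ^ p = Bq * G' ^ (k * J) := by rw [← hc'.2, hc'.1]
  set ρ := G * G'⁻¹ with hρ
  have hρ1 : 1 < ρ := one_lt_div' hG'0 hlt
  have hρeq : ρ ^ p = ρ ^ (k * J) := by
    calc ρ ^ p = G ^ p * (G' ^ p)⁻¹ := by rw [hρ, mul_pow, inv_pow]
      _ = (Bq * G ^ (k * J)) * (Bq * G' ^ (k * J))⁻¹ := by rw [e1, e2]
      _ = (Bq * Bq⁻¹) * (G ^ (k * J) * (G' ^ (k * J))⁻¹) := by
          rw [mul_inv, mul_mul_mul_comm]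
      _ = G ^ (k * J) * (G' ^ (k * J))⁻¹ := by rw [mul_inv_cancel₀ hBq, one_mul]
      _ = ρ ^ (k * J) := by rw [hρ, mul_pow, inv_pow]
  have hpkJ : p = k * J := by
    rcases Nat.lt_trichotomy p (k * J) with h | h | h
    · exact absurd hρeq (pow_lt_pow_right₀ hρ1 h).ne
    · exact h
    · exact absurd hρeq.symm (pow_lt_pow_right₀ hρ1 h).ne
  have hdvd : k ∣ p := Dvd.intro J hpkJ.symm
  rcases (Nat.Prime.eq_one_or_self_of_dvd hp k hdvd) with hk | hk
  · -- k = 1, J = p, so p * natDegree f ≤ p forces natDegree f ≤ 1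
    subst hk
    rw [one_mul] at hpkJ
    subst hpkJ
    rw [hdeg'] at hJ
    have : p * 1 < p * f.natDegree := Nat.mul_lt_mul_of_le_of_lt le_rfl (by omega) hp.pos
    omega
  · subst hk
    omega

include hneg hnomax in
theorem good_all (hp : p.Prime) [CharP K p] (ha : algebraMap K F a = θ ^ p - θ) :
    ∀ M : ℕ, M < p → ∀ f : K[X], f ≠ 0 → f.natDegree = M → Good v θ f := by
  intro M
  induction M using Nat.strong_induction_on with
  | _ M ih =>
  intro hMp f hf0 hfM
  subst hfM
  by_cases hd0 : f.natDegree = 0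
  · obtain ⟨b, rfl⟩ : ∃ b, f = C b := ⟨f.coeff 0, eq_C_of_natDegree_eq_zero hd0⟩
    exact good_C (fun h => hf0 (by rw [h, map_zero]))
  by_cases hd1 : f.natDegree = 1
  · exact good_deg1 hneg hd1
  haveI : DecidablePred fun i : ℕ => hasseDeriv i f ≠ (0 : K[X]) :=
    fun i => Classical.propDecidable _
  have hN2 : 2 ≤ f.natDegree := by omega
  have hNp : f.natDegree < p := hMp
  set N := f.natDegree with hNdef
  set I : Finset ℕ := (Finset.Icc 1 N).filter (fun i => hasseDeriv i f ≠ 0) with hI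
  have hNI : N ∈ I := by
    rw [hI, Finset.mem_filter, Finset.mem_Icc]
    refine ⟨⟨by omega, le_rfl⟩, fun h0 => ?_⟩
    have hc0 : (hasseDeriv N f).coeff 0 = f.coeff N := by
      rw [hasseDeriv_coeff]
      simp [Nat.choose_self]
    rw [h0, coeff_zero] at hc0
    exact (leadingCoeff_ne_zero.mpr hf0) (by rw [leadingCoeff, ← hNdef, ← hc0])
  have hIne : I.Nonempty := ⟨N, hNI⟩
  have hIcc : ∀ i ∈ I, 1 ≤ i ∧ i ≤ N := fun i hi => by
    have := (Finset.mem_filter.mp hi).1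
    exact Finset.mem_Icc.mp this
  have hder : ∀ i ∈ I, Good v θ (hasseDeriv i f) := by
    intro i hi
    have h1 : 1 ≤ i := (hIcc i hi).1
    have hd : (hasseDeriv i f).natDegree < N := by
      have := natDegree_hasseDeriv_le f i
      omega
    exact ih _ hd (by omega) _ (Finset.mem_filter.mp hi).2 rfl
  set β : ℕ → Γ := fun i => v (aeval θ (hasseDeriv i f)) with hβ
  have hβ0 : ∀ i ∈ I, β i ≠ 0 := fun i hi => (hder i hi).1
  obtain ⟨k, hkI, hmax⟩ := maxlemma hneg β I hIne hβ0
  have hk1 : 1 ≤ k := (hIcc k hkI).1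
  have hkN : k ≤ N := (hIcc k hkI).2
  have hval : Ev v θ fun c => ∀ i ∈ I, v (algebraMap K F ((hasseDeriv i f).eval c)) = β i :=
    Ev.finsetForall fun i hi => ((hder i hi).2).mono fun c hc => hc.1
  obtain ⟨c₀, hc₀⟩ := hval.and hmax
  -- abbreviations
  set t : ℕ → K → F := fun i c =>
    algebraMap K F ((hasseDeriv i f).eval c) * (θ - algebraMap K F c) ^ i with ht
  set E : K → F := fun c => ∑ i ∈ Finset.Icc 1 N, t i c with hE
  have htay : ∀ c : K, aeval θ f = algebraMap K F (f.eval c) + E c := fun c =>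
    taylor_expand θ f c
  have hterm : ∀ c : K, v (θ - algebraMap K F c) < v (θ - algebraMap K F c₀) →
      (∀ i ∈ I, v (t i c) = β i * v (θ - algebraMap K F c) ^ i) := by
    intro c hc i hi
    rw [ht, Valuation.map_mul, Valuation.map_pow, (hc₀ c hc).1 i hi]
  have htk0 : ∀ c : K, β k * v (θ - algebraMap K F c) ^ k ≠ 0 := fun c =>
    mul_ne_zero (hβ0 k hkI) (pow_ne_zero _ (gam_ne_zero hneg c))
  have hEc : ∀ c : K, v (θ - algebraMap K F c) < v (θ - algebraMap K F c₀) →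
      v (E c) = β k * v (θ - algebraMap K F c) ^ k := by
    intro c hc
    have hkmem : k ∈ Finset.Icc 1 N := Finset.mem_Icc.mpr ⟨hk1, hkN⟩
    have hrest : ∀ i ∈ Finset.Icc 1 N, i ≠ k → v (t i c) < v (t k c) := by
      intro i hiIcc hik
      by_cases hiI : i ∈ I
      · rw [hterm c hc i hiI, hterm c hc k hkI]
        exact (hc₀ c hc).2 i hiI hik
      · have h0 : hasseDeriv i f = 0 := by
          by_contra hne
          exact hiI (Finset.mem_filter.mpr ⟨hiIcc, hne⟩)
        rw [ht]
        simp only [h0, eval_zero, map_zero, zero_mul, Valuation.map_zero]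
        rw [hterm c hc k hkI]
        exact zero_lt_iff.mpr (htk0 c)
    have hsum := val_sum_eq v hkmem
      (show v (t k c) ≠ 0 by rw [hterm c hc k hkI]; exact htk0 c) hrest
    rw [hE, hsum, hterm c hc k hkI]
  set μ := v (aeval θ f) with hμ
  by_cases hdich : ∃ c₁ : K, v (θ - algebraMap K F c₁) < v (θ - algebraMap K F c₀) ∧
      β k * v (θ - algebraMap K F c₁) ^ k < μ
  · -- good case
    obtain ⟨c₁, hc₁, hc₁lt⟩ := hdich
    have hμ0 : μ ≠ 0 := (lt_of_le_of_lt zero_le' hc₁lt).ne'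
    refine ⟨hμ0, ⟨c₁, fun c hc => ?_⟩⟩
    dsimp only
    have hcc₀ : v (θ - algebraMap K F c) < v (θ - algebraMap K F c₀) := hc.trans hc₁
    have hElt : v (E c) < μ := by
      rw [hEc c hcc₀]
      calc β k * v (θ - algebraMap K F c) ^ k
          < β k * v (θ - algebraMap K F c₁) ^ k :=
            mul_lt_mul_left' (hβ0 k hkI) (pow_lt_pow_left' hc (by omega))
        _ < μ := hc₁lt
    have htlt : ∀ i, 1 ≤ i → v (t i c) < μ := by
      intro i hi1
      by_cases hiI : i ∈ I
      · rcases eq_or_ne i k with rfl | hik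
        · rw [hterm c hcc₀ i hiI]
          calc β i * v (θ - algebraMap K F c) ^ i
              < β i * v (θ - algebraMap K F c₁) ^ i :=
                mul_lt_mul_left' (hβ0 i hiI) (pow_lt_pow_left' hc (by omega))
            _ < μ := hc₁lt
        · calc v (t i c) < v (t k c) := by
                rw [hterm c hcc₀ i hiI, hterm c hcc₀ k hkI]
                exact (hc₀ c hcc₀).2 i hiI hik
            _ < μ := by
                rw [hterm c hcc₀ k hkI]
                calc β k * v (θ - algebraMap K F c) ^ k
                    < β k * v (θ - algebraMap K F c₁) ^ k :=
                      mul_lt_mul_left' (hβ0 k hkI) (pow_lt_pow_left' hc (by omega))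
                  _ < μ := hc₁lt
      · have h0 : hasseDeriv i f = 0 := by
          by_contra hne
          by_cases hiN : i ≤ N
          · exact hiI (Finset.mem_filter.mpr ⟨Finset.mem_Icc.mpr ⟨hi1, hiN⟩, hne⟩)
          · exact hne (hasseDeriv_eq_zero_of_lt_natDegree f i (by omega))
        rw [ht]
        simp only [h0, eval_zero, map_zero, zero_mul, Valuation.map_zero]
        exact zero_lt_iff.mpr hμ0
    constructor
    · -- v (f(c)) = μ
      have hfc : algebraMap K F (f.eval c) = aeval θ f - E c := by
        rw [htay c]; ring
      rw [hfc, Valuation.map_sub_eq_of_lt_left _ hElt]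
    · exact htlt
  · -- pattern case: contradiction via `exclusion`
    exfalso
    push_neg at hdich
    have hstrict : ∀ c : K, v (θ - algebraMap K F c) < v (θ - algebraMap K F c₀) →
        μ < β k * v (θ - algebraMap K F c) ^ k := by
      intro c hc
      obtain ⟨c', hc'⟩ := hnomax c
      calc μ ≤ β k * v (θ - algebraMap K F c') ^ k := hdich c' (hc'.trans hc)
        _ < β k * v (θ - algebraMap K F c) ^ k :=
            mul_lt_mul_left' (hβ0 k hkI) (pow_lt_pow_left' hc' (by omega))
    have hpat : Ev v θ fun c =>
        v (algebraMap K F (f.eval c)) = β k * v (θ - algebraMap K F c) ^ k := by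
      refine ⟨c₀, fun c hc => ?_⟩
      dsimp only
      have hfc : algebraMap K F (f.eval c) = aeval θ f - E c := by
        rw [htay c]; ring
      rw [hfc, Valuation.map_sub_eq_of_lt_right, hEc c hc]
      rw [hEc c hc]
      exact hstrict c hc
    exact exclusion hneg hnomax hp ha hN2 hNp hk1 hkN (hβ0 k hkI) hpat
      (fun g hg hlt => ih g.natDegree (by omega) (by omega) g hg rfl)

include hneg hnomax in
lemma value_surjective (hp : p.Prime) [CharP K p] (ha : algebraMap K F a = θ ^ p - θ)
    (hgen : IntermediateField.adjoin K {θ} = ⊤) (x : F) :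
    ∃ c : K, v (algebraMap K F c) = v x := by
  rcases eq_or_ne x 0 with rfl | hx
  · exact ⟨0, by simp⟩
  obtain ⟨r, hrdeg, hrx⟩ := exists_poly_rep hp ha hgen x
  have hr0 : r ≠ 0 := fun h => hx (by rw [← hrx, h, map_zero])
  have hgood : Good v θ r := good_all hneg hnomax hp ha r.natDegree hrdeg r hr0 rfl
  obtain ⟨c, hc⟩ := Ev.elim hnomax hgood.2
  exact ⟨r.eval c, by rw [hc.1, hrx]⟩

include hneg hnomax in
lemma residue_surjective (hp : p.Prime) [CharP K p] (ha : algebraMap K F a = θ ^ p - θ)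
    (hgen : IntermediateField.adjoin K {θ} = ⊤) (x : F) (hx1 : v x ≤ 1) :
    ∃ c : K, v (x - algebraMap K F c) < 1 := by
  rcases eq_or_ne x 0 with rfl | hx
  · exact ⟨0, by simpa using zero_lt_one⟩
  obtain ⟨r, hrdeg, hrx⟩ := exists_poly_rep hp ha hgen x
  have hr0 : r ≠ 0 := fun h => hx (by rw [← hrx, h, map_zero])
  have hgood : Good v θ r := good_all hneg hnomax hp ha r.natDegree hrdeg r hr0 rfl
  obtain ⟨c, hc⟩ := Ev.elim hnomax hgood.diff
  refine ⟨r.eval c, ?_⟩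
  rw [← hrx]
  exact lt_of_lt_of_le hc.2 (by rw [hrx]; exact hx1)

include hneg hnomax in
lemma unique_ext (hp : p.Prime) [CharP K p] (ha : algebraMap K F a = θ ^ p - θ)
    (hgen : IntermediateField.adjoin K {θ} = ⊤) (R : ValuationSubring F)
    (hR : R.toSubring.comap (algebraMap K F) = (v.comap (algebraMap K F)).integer) :
    R = v.valuationSubring := by
  have hinj : Function.Injective (algebraMap K F) := (algebraMap K F).injective
  -- membership transfer on K
  have hRK : ∀ s : K, algebraMap K F s ∈ R ↔ v (algebraMap K F s) ≤ 1 := by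
    intro s
    have h1 : s ∈ R.toSubring.comap (algebraMap K F) ↔
        s ∈ (v.comap (algebraMap K F)).integer := by rw [hR]
    simpa [Subring.mem_comap, Valuation.mem_integer_iff, Valuation.comap_apply]
      using h1
  -- strict transfer on K
  have hRKlt : ∀ s : K, v (algebraMap K F s) < 1 →
      R.valuation (algebraMap K F s) < 1 := by
    intro s hs
    rcases eq_or_ne s 0 with rfl | hs0
    · simpa using zero_lt_one
    have hne : algebraMap K F s ≠ 0 := fun h => hs0 (hinj (by simpa using h))
    have hvne : v (algebraMap K F s) ≠ 0 := (Valuation.ne_zero_iff v).mpr hne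
    rw [← not_le]
    intro hcon
    have h1 : R.valuation (algebraMap K F s⁻¹) ≤ 1 := by
      rw [map_inv₀, map_inv₀]
      exact inv_le_one_of_one_le' hcon
    have h2 : algebraMap K F s⁻¹ ∈ R := R.mem_of_valuation_le_one _ h1
    have h3 := (hRK s⁻¹).mp h2
    rw [map_inv₀, map_inv₀] at h3
    exact absurd (one_le_of_inv_le_one' hvne h3) hs.not_ge
  -- θ - c is not in R
  have hAmem : ∀ c : K, (θ - algebraMap K F c) ∉ R := by
    intro c hmem
    have h1 : ((θ - algebraMap K F c) ^ p - (θ - algebraMap K F c)) ∈ R :=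
      sub_mem (pow_mem hmem p) hmem
    rw [← Aident hp ha c] at h1
    have h2 := (hRK _).mp h1
    rw [Aval hneg hp ha c] at h2
    have h3 : (1 : Γ) < v (θ - algebraMap K F c) ^ p :=
      lt_of_lt_of_le (hneg c) (le_self_pow₀ (hneg c).le hp.ne_zero)
    exact absurd h2 h3.not_ge
  have hW1 : ∀ c : K, 1 < R.valuation (θ - algebraMap K F c) := by
    intro c
    by_contra hcon
    push_neg at hcon
    exact hAmem c (R.mem_of_valuation_le_one _ hcon)
  have hWp : ∀ c : K, R.valuation (θ - algebraMap K F c) ^ p =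
      R.valuation (algebraMap K F (a - c ^ p + c)) := by
    intro c
    have hiden : algebraMap K F (a - c ^ p + c) =
        (θ - algebraMap K F c) ^ p - (θ - algebraMap K F c) := Aident hp ha c
    have hWW : R.valuation (θ - algebraMap K F c) ≤
        R.valuation (θ - algebraMap K F c) ^ p :=
      le_self_pow₀ (hW1 c).le hp.ne_zero
    have hWWlt : R.valuation (θ - algebraMap K F c) <
        R.valuation (θ - algebraMap K F c) ^ p := by
      calc R.valuation (θ - algebraMap K F c)
          = R.valuation (θ - algebraMap K F c) ^ 1 := (pow_one _).symm
        _ < R.valuation (θ - algebraMap K F c) ^ p :=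
            pow_lt_pow_right₀ (hW1 c) hp.one_lt
    rcases lt_trichotomy (R.valuation (θ - algebraMap K F c) ^ p)
      (R.valuation (algebraMap K F (a - c ^ p + c))) with h | h | h
    · exfalso
      have hle : R.valuation (algebraMap K F (a - c ^ p + c)) ≤
          R.valuation (θ - algebraMap K F c) ^ p := by
        rw [hiden]
        refine le_trans (Valuation.map_sub _ _ _) (max_le ?_ hWW)
        rw [Valuation.map_pow]
      exact absurd h hle.not_gt
    · exact h
    · exfalso
      have heq : (θ - algebraMap K F c) ^ p =
          algebraMap K F (a - c ^ p + c) + (θ - algebraMap K F c) := by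
        rw [hiden]; ring
      have hle : R.valuation (θ - algebraMap K F c) ^ p ≤
          max (R.valuation (algebraMap K F (a - c ^ p + c)))
            (R.valuation (θ - algebraMap K F c)) := by
        rw [← Valuation.map_pow, heq]
        exact Valuation.map_add _ _ _
      rcases max_cases (R.valuation (algebraMap K F (a - c ^ p + c)))
        (R.valuation (θ - algebraMap K F c)) with ⟨hm, _⟩ | ⟨hm, _⟩ <;> rw [hm] at hle
      · exact absurd (lt_of_le_of_lt hle h) (lt_irrefl _)
      · exact absurd (lt_of_le_of_lt hle hWWlt) (lt_irrefl _)
  -- strict transfer for monomials d * (θ - c)^i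
  have hTL : ∀ (d c : K) (i : ℕ),
      v (algebraMap K F d * (θ - algebraMap K F c) ^ i) < 1 →
      R.valuation (algebraMap K F d * (θ - algebraMap K F c) ^ i) < 1 := by
    intro d c i hv
    rcases eq_or_ne d 0 with rfl | hd0
    · simpa using zero_lt_one
    have h1 : (v (algebraMap K F d) * v (θ - algebraMap K F c) ^ i) ^ p < 1 := by
      rw [Valuation.map_mul, Valuation.map_pow] at hv
      exact pow_lt_one₀ zero_le' hv hp.ne_zero
    have h2 : v (algebraMap K F (d ^ p * (a - c ^ p + c) ^ i)) < 1 := by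
      rw [map_mul, map_pow, map_pow, Valuation.map_mul, Valuation.map_pow,
        Valuation.map_pow, Aval hneg hp ha c]
      calc v (algebraMap K F d) ^ p * (v (θ - algebraMap K F c) ^ p) ^ i
          = (v (algebraMap K F d) * v (θ - algebraMap K F c) ^ i) ^ p := by
            rw [mul_pow, pow_right_comm]
        _ < 1 := h1
    have h3 := hRKlt _ h2
    rw [map_mul, map_pow, map_pow, Valuation.map_mul, Valuation.map_pow,
      Valuation.map_pow, ← hWp c] at h3
    have h4 : (R.valuation (algebraMap K F d) *
        R.valuation (θ - algebraMap K F c) ^ i) ^ p < 1 := by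
      rw [mul_pow, pow_right_comm]
      exact h3
    have h5 : R.valuation (algebraMap K F d) *
        R.valuation (θ - algebraMap K F c) ^ i < 1 := by
      by_contra hcon
      push_neg at hcon
      exact absurd h4 (one_le_pow₀ hcon).not_gt
    rw [Valuation.map_mul, Valuation.map_pow]
    exact h5
  -- now show the two valuation subrings coincide
  apply SetLike.ext
  intro x
  rw [Valuation.mem_valuationSubring_iff]
  rcases eq_or_ne x 0 with rfl | hx
  · simp only [zero_mem, map_zero, zero_le', iff_true]
  obtain ⟨r, hrdeg, hrx⟩ := exists_poly_rep hp ha hgen x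
  have hr0 : r ≠ 0 := fun h => hx (by rw [← hrx, h, map_zero])
  have hgood : Good v θ r := good_all hneg hnomax hp ha r.natDegree hrdeg r hr0 rfl
  obtain ⟨c, hvr, hterms⟩ := Ev.elim hnomax hgood.2
  set s : K := r.eval c with hs
  have hvs : v (algebraMap K F s) = v x := by rw [hvr, hrx]
  have hvx0 : v x ≠ 0 := (Valuation.ne_zero_iff v).mpr hx
  have hsF : algebraMap K F s ≠ 0 := by
    intro h
    rw [h, Valuation.map_zero] at hvs
    exact hvx0 hvs.symm
  set ε : F := ∑ i ∈ Finset.Icc 1 r.natDegree, (algebraMap K F s)⁻¹ *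
      (algebraMap K F ((hasseDeriv i r).eval c) * (θ - algebraMap K F c) ^ i) with hε
  have hxdecomp : x = algebraMap K F s * (1 + ε) := by
    rw [hε, mul_add, mul_one, Finset.mul_sum]
    have hterm_eq : ∀ i ∈ Finset.Icc 1 r.natDegree,
        algebraMap K F s * ((algebraMap K F s)⁻¹ *
          (algebraMap K F ((hasseDeriv i r).eval c) * (θ - algebraMap K F c) ^ i)) =
        algebraMap K F ((hasseDeriv i r).eval c) * (θ - algebraMap K F c) ^ i :=
      fun i _ => by rw [← mul_assoc, mul_inv_cancel₀ hsF, one_mul]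
    rw [Finset.sum_congr rfl hterm_eq, ← hrx, taylor_expand θ r c]
  have hv_t : ∀ i ∈ Finset.Icc 1 r.natDegree,
      v ((algebraMap K F s)⁻¹ *
        (algebraMap K F ((hasseDeriv i r).eval c) * (θ - algebraMap K F c) ^ i)) < 1 := by
    intro i hi
    rw [Valuation.map_mul, map_inv₀]
    have h1 : v (algebraMap K F ((hasseDeriv i r).eval c) *
        (θ - algebraMap K F c) ^ i) < v (algebraMap K F s) := by
      rw [hvr]
      exact hterms i (Finset.mem_Icc.mp hi).1
    have hvsne : v (algebraMap K F s) ≠ 0 := (Valuation.ne_zero_iff v).mpr hsF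
    calc (v (algebraMap K F s))⁻¹ * v (algebraMap K F ((hasseDeriv i r).eval c) *
          (θ - algebraMap K F c) ^ i)
        < (v (algebraMap K F s))⁻¹ * v (algebraMap K F s) :=
          mul_lt_mul_left' (inv_ne_zero hvsne) h1
      _ = 1 := inv_mul_cancel₀ hvsne
  have hw_t : ∀ i ∈ Finset.Icc 1 r.natDegree,
      R.valuation ((algebraMap K F s)⁻¹ *
        (algebraMap K F ((hasseDeriv i r).eval c) * (θ - algebraMap K F c) ^ i)) < 1 := by
    intro i hi
    have hshape : (algebraMap K F s)⁻¹ *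
        (algebraMap K F ((hasseDeriv i r).eval c) * (θ - algebraMap K F c) ^ i) =
        algebraMap K F (s⁻¹ * (hasseDeriv i r).eval c) * (θ - algebraMap K F c) ^ i := by
      rw [map_mul, map_inv₀, mul_assoc]
    rw [hshape]
    apply hTL
    rw [← hshape]
    exact hv_t i hi
  have hvε : v ε < 1 := by
    rw [hε]
    exact Valuation.map_sum_lt v one_ne_zero hv_t
  have hwε : R.valuation ε < 1 := by
    rw [hε]
    exact Valuation.map_sum_lt _ one_ne_zero hw_t
  have hv1 : v (1 + ε) = 1 := v.map_one_add_of_lt hvε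
  have hw1 : R.valuation (1 + ε) = 1 := R.valuation.map_one_add_of_lt hwε
  constructor
  · intro hxR
    have h1 : R.valuation x ≤ 1 := (R.valuation_le_one_iff x).mpr hxR
    have h2 : R.valuation x = R.valuation (algebraMap K F s) := by
      rw [hxdecomp, Valuation.map_mul, hw1, mul_one]
    rw [h2] at h1
    have h3 := (hRK s).mp (R.mem_of_valuation_le_one _ h1)
    rw [← hvs]
    exact h3
  · intro hvx
    have h1 : v (algebraMap K F s) ≤ 1 := by rw [hvs]; exact hvx
    have h2 : algebraMap K F s ∈ R := (hRK s).mpr h1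
    have h3 : (1 + ε) ∈ R := R.mem_of_valuation_le_one _ (le_of_eq hw1)
    rw [hxdecomp]
    exact mul_mem h2 h3

end Exclusion

end Dev

/-- Let `(K,v)` be a valued field of characteristic `p > 0` and
`(K(θ)|K,v)` an Artin-Schreier extension with Artin-Schreier generator `θ`.  If
`v(θ−c) < 0` for all `c ∈ K` and `v(θ−K)` has no maximal element, then the extension of
`v` from `K` to `K(θ)` is unique and `(K(θ)|K,v)` is immediate, with defect `p`.

Here `F = K(θ)`.  Multiplicative notation (order reversed): "`v(θ−c) < 0` additively"
reads `1 < v (θ − c)`, and "no maximal element" reads `∀ c ∃ c', v(θ−c') < v(θ−c)`. -/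
theorem statement19 {K F : Type*} [Field K] [Field F] [Algebra K F]
    {Γ : Type*} [LinearOrderedCommGroupWithZero Γ] (v : Valuation F Γ)
    (p : ℕ) [Fact p.Prime] [CharP K p]
    (θ : F) (hgen : IntermediateField.adjoin K {θ} = ⊤)
    (hnt : θ ∉ Set.range (algebraMap K F))
    (hAS : θ ^ p - θ ∈ Set.range (algebraMap K F))
    (hneg : ∀ c : K, 1 < v (θ - algebraMap K F c))
    (hnomax : ∀ c : K, ∃ c' : K, v (θ - algebraMap K F c') < v (θ - algebraMap K F c)) :
    UniqueExtension K F v ∧ IsImmediateExtension K F v := by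
  obtain ⟨a, ha⟩ := hAS
  have hp : p.Prime := Fact.out
  exact ⟨fun R hR => unique_ext hneg hnomax hp ha hgen R hR,
    value_surjective hneg hnomax hp ha hgen,
    residue_surjective hneg hnomax hp ha hgen⟩

end Statement19
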